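/- Combining the previous two results: in the two-period Gaussian linear model with E[X₂|A₁=a₁] = c·a₁ where c = Cov(A₁,X₂)/Var(A₁), the orthogonalized regression coefficients (β₁ᵒ, β₂ᵒ) from minimizing E(Y − β₁A₁ − λX̃₂ − β₂A₂)² over (β₁, λ, β₂) equal the causal parameters (θ₁, θ₂) of the g-formula: ψ(a₁,a₂) = θ₁a₁ + θ₂a₂. -/

import Mathlib

open MeasureTheory

/-- Population covariance of two real random variables. -/
noncomputable def cov {Ω : Type*} [MeasurableSpace Ω] (μ : Measure Ω) (f g : Ω → ℝ) : ℝ :=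
  (∫ ω, f ω * g ω ∂μ) - (∫ ω, f ω ∂μ) * (∫ ω, g ω ∂μ)

/-- In the two-period setting with conditional mean E[X₂|A₁=a₁] = c·a₁,
where c = Cov(A₁,X₂)/Var(A₁), the orthogonalized-regression coefficients
(β₁ᵒ, β₂ᵒ) = (po.1, po.2.2) (minimizing E(Y − β₁A₁ − λX̃₂ − β₂A₂)²) equal the causal
parameters of the g-formula: ψ(a₁,a₂) = β₁ᵒ a₁ + β₂ᵒ a₂, where
ψ(a₁,a₂) = ∫ (β₁ⁿa₁ + λ₂ⁿx + β₂ⁿa₂) dν(a₁)(x) with (β₁ⁿ,λ₂ⁿ,β₂ⁿ) the naive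
least-squares coefficients (= coefficients of the linear conditional mean of Y). -/
theorem stmt5 {Ω : Type*} [MeasurableSpace Ω] (μ : Measure Ω) [IsProbabilityMeasure μ]
    (A1 X2 A2 Y : Ω → ℝ)
    (hA1 : MemLp A1 2 μ) (hX2 : MemLp X2 2 μ) (hA2 : MemLp A2 2 μ) (hY : MemLp Y 2 μ)
    (hvar : 0 < cov μ A1 A1)
    (c : ℝ) (hc : c = cov μ A1 X2 / cov μ A1 A1)
    (Fn Fo : ℝ × ℝ × ℝ → ℝ)
    (hFn : Fn = fun p => ∫ ω, (Y ω - p.1 * A1 ω - p.2.1 * X2 ω - p.2.2 * A2 ω) ^ 2 ∂μ)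
    (hFo : Fo = fun p =>
      ∫ ω, (Y ω - p.1 * A1 ω - p.2.1 * (X2 ω - c * A1 ω) - p.2.2 * A2 ω) ^ 2 ∂μ)
    (pn po : ℝ × ℝ × ℝ)
    (hminn : ∀ q, Fn pn ≤ Fn q) (huniqn : ∀ q, (∀ r, Fn q ≤ Fn r) → q = pn)
    (hmino : ∀ q, Fo po ≤ Fo q) (huniqo : ∀ q, (∀ r, Fo q ≤ Fo r) → q = po)
    -- conditional law of X₂ given A₁ = a₁, with linear conditional mean c·a₁
    (ν : ℝ → Measure ℝ) [∀ a, IsProbabilityMeasure (ν a)]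
    (hint : ∀ a, Integrable (fun x : ℝ => x) (ν a))
    (hmean : ∀ a, ∫ x, x ∂ν a = c * a)
    -- g-formula with the (naive) conditional-mean coefficients of Y
    (ψ : ℝ → ℝ → ℝ)
    (hψ : ψ = fun a1 a2 => ∫ x, (pn.1 * a1 + pn.2.1 * x + pn.2.2 * a2) ∂ν a1) :
    ∀ a1 a2, ψ a1 a2 = po.1 * a1 + po.2.2 * a2 := by
  have hFoFn : ∀ p : ℝ × ℝ × ℝ, Fo p = Fn (p.1 - p.2.1 * c, p.2.1, p.2.2) := by
    intro p
    rw [hFo, hFn]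
    simp only
    congr 1
    funext ω
    ring
  have hpn : pn = (po.1 - po.2.1 * c, po.2.1, po.2.2) := by
    refine (huniqn _ ?_).symm
    intro r
    rw [← hFoFn po]
    have : Fn r = Fo (r.1 + r.2.1 * c, r.2.1, r.2.2) := by
      rw [hFoFn]
      simp only
      congr 1
      ring
    rw [this]
    exact hmino _
  intro a1 a2
  rw [hψ]
  simp only
  have : (fun x : ℝ => pn.1 * a1 + pn.2.1 * x + pn.2.2 * a2)
      = fun x : ℝ => (pn.1 * a1 + pn.2.2 * a2) + pn.2.1 * x := by
    funext x; ring
  rw [this, integral_add (integrable_const _) ((hint a1).const_mul _),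
    MeasureTheory.integral_const_mul, hmean, integral_const]
  simp [hpn]
  ring
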